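/- Let p be an odd prime, l an integer, n ≥ 1, and (a_1,b_1),…,(a_n,b_n) pairs of integers with p ∤ a_j for all j; choose integers c_j with a_j·c_j ≡ 1 (mod p²), and set B = Σ_{j=1}^{n} b_j·c_j and T = Σ_{h ∈ ℤ/pℤ} Σ_{s=0}^{p−1} Π_{j=1}^{n} η_{h,s}(a_j,b_j). Then: (i) if p ∤ B, then T = p; (ii) if B = r·p for an integer r, then T = p · Σ_{k=0}^{p−1} ζ_p^{−l·r·k²} = p·S_p(−l·r). -/

import Mathlib

/-- `ζ_n = exp(2πi/n)`. -/
noncomputable def zetaC (n : ℕ) : ℂ := Complex.exp (2 * Real.pi * Complex.I / n)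

/-- The Gauss-type sum `S_p(A) = Σ_{k=0}^{p−1} ζ_p^{A·k²}`. -/
noncomputable def SP (p : ℕ) (A : ℤ) : ℂ := ∑ k ∈ Finset.range p, zetaC p ^ (A * (k : ℤ) ^ 2)

/-- `η_{h,s}(a,b) = Σ_{z ∈ ℤ/pℤ, a·z = h} ζ_{p²}^{l·a·b·z̃² − (2·l·h̃ + p·s)·b·z̃}`. -/
noncomputable def etaP (p : ℕ) [NeZero p] (l : ℤ) (h : ZMod p) (s a b : ℤ) : ℂ :=
  ∑ z : ZMod p,
    if a • z = h then
      zetaC (p ^ 2) ^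
        (l * a * b * (z.val : ℤ) ^ 2 - (2 * l * (h.val : ℤ) + p * s) * b * (z.val : ℤ))
    else 0

lemma zetaC_ne_zero (n : ℕ) : zetaC n ≠ 0 := Complex.exp_ne_zero _

lemma zetaC_prim (n : ℕ) (hn : n ≠ 0) : IsPrimitiveRoot (zetaC n) n :=
  Complex.isPrimitiveRoot_exp n hn

lemma zetaC_zpow_congr (n : ℕ) (hn : n ≠ 0) {m m' : ℤ} (h : m ≡ m' [ZMOD (n : ℤ)]) :
    zetaC n ^ m = zetaC n ^ m' := by
  have h1 : ((n : ℤ)) ∣ m' - m := Int.ModEq.dvd h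
  have h2 : zetaC n ^ (m' - m) = 1 :=
    ((zetaC_prim n hn).zpow_eq_one_iff_dvd (m' - m)).mpr h1
  have hz := zetaC_ne_zero n
  have : zetaC n ^ m' = zetaC n ^ (m' - m) * zetaC n ^ m := by
    rw [← zpow_add₀ hz]; congr 1; ring
  rw [this, h2, one_mul]

lemma zetaC_pow_mul (p : ℕ) (hp : p ≠ 0) (k : ℤ) : zetaC (p ^ 2) ^ ((p : ℤ) * k) = zetaC p ^ k := by
  unfold zetaC
  rw [← Complex.exp_int_mul, ← Complex.exp_int_mul]
  congr 1
  have hpc : (p : ℂ) ≠ 0 := Nat.cast_ne_zero.mpr hp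
  push_cast
  field_simp

lemma zpow_sum' {x : ℂ} (hx : x ≠ 0) {ι : Type*} (s : Finset ι) (f : ι → ℤ) :
    x ^ (∑ i ∈ s, f i) = ∏ i ∈ s, x ^ f i := by
  classical
  induction s using Finset.cons_induction with
  | empty => simp
  | cons i s hi ih => rw [Finset.sum_cons, Finset.prod_cons, zpow_add₀ hx, ih]

lemma geom_root_one {p : ℕ} {ζ : ℂ} (h : ζ = 1) :
    ∑ s ∈ Finset.range p, ζ ^ s = (p : ℂ) := by simp [h]

lemma geom_root_zero {p : ℕ} {ζ : ℂ} (h : ζ ≠ 1) (hζ : ζ ^ p = 1) :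
    ∑ s ∈ Finset.range p, ζ ^ s = 0 := by
  rw [geom_sum_eq h, hζ]; simp

lemma etaP_eq (p : ℕ) [NeZero p] (hp : p.Prime) (l : ℤ) (h : ZMod p) (s a b : ℤ)
    (ha : ¬ (p : ℤ) ∣ a) :
    etaP p l h s a b =
      zetaC (p ^ 2) ^
        (l * a * b * ((((a : ZMod p))⁻¹ * h).val : ℤ) ^ 2 -
          (2 * l * (h.val : ℤ) + p * s) * b * ((((a : ZMod p))⁻¹ * h).val : ℤ)) := by
  haveI := Fact.mk hp
  have hau : (a : ZMod p) ≠ 0 := by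
    simpa [ZMod.intCast_zmod_eq_zero_iff_dvd] using ha
  have key : ∀ z : ZMod p, (a • z = h) ↔ z = (a : ZMod p)⁻¹ * h := by
    intro z
    rw [zsmul_eq_mul]
    constructor
    · intro hz; rw [← hz, ← mul_assoc, inv_mul_cancel₀ hau, one_mul]
    · rintro rfl; rw [← mul_assoc, mul_inv_cancel₀ hau, one_mul]
  simp only [etaP, key, Finset.sum_ite_eq', Finset.mem_univ, if_true]

lemma prod_etaP_eq (p : ℕ) [NeZero p] (hp : p.Prime) (l : ℤ)
    (n : ℕ) (a b c : Fin n → ℤ)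
    (ha : ∀ j, ¬ (p : ℤ) ∣ a j) (hc : ∀ j, a j * c j ≡ 1 [ZMOD ((p : ℤ) ^ 2)])
    (h : ZMod p) (s : ℕ) :
    (∏ j, etaP p l h (s : ℤ) (a j) (b j)) =
      zetaC (p ^ 2) ^ (-(l * ((h.val : ℤ)) ^ 2) * (∑ j, b j * c j)) *
        (zetaC p ^ (-((h.val : ℤ) * (∑ j, b j * c j)))) ^ s := by
  haveI := Fact.mk hp
  have hppos : p ≠ 0 := NeZero.ne p
  have hp2ne : (p ^ 2 : ℕ) ≠ 0 := pow_ne_zero _ hppos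
  have hζ2 : zetaC (p ^ 2) ≠ 0 := zetaC_ne_zero _
  have hdvd : ∀ j : Fin n, ((p : ℤ) ^ 2) ∣
      ((-(l * ((h.val : ℤ)) ^ 2) + -((p : ℤ) * (s : ℤ) * (h.val : ℤ))) * (b j * c j) -
        (l * a j * b j * ((((a j : ZMod p))⁻¹ * h).val : ℤ) ^ 2 -
          (2 * l * (h.val : ℤ) + (p : ℤ) * (s : ℤ)) * b j * ((((a j : ZMod p))⁻¹ * h).val : ℤ))) := by
    intro j
    set V : ℤ := ((((a j : ZMod p))⁻¹ * h).val : ℤ) with hVdef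
    set H : ℤ := (h.val : ℤ) with hHdef
    have hau : ((a j : ℤ) : ZMod p) ≠ 0 := by
      simpa [ZMod.intCast_zmod_eq_zero_iff_dvd] using ha j
    have hzj : ((a j : ℤ) : ZMod p) * (((a j : ℤ) : ZMod p))⁻¹ * h = h := by
      rw [mul_inv_cancel₀ hau, one_mul]
    have hv1 : (p : ℤ) ∣ (a j * V - H) := by
      have hc0 : ((a j * V - H : ℤ) : ZMod p) = 0 := by
        push_cast [hVdef, hHdef]
        rw [ZMod.natCast_zmod_val, ZMod.natCast_zmod_val, ← mul_assoc, hzj, sub_self]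
      exact (ZMod.intCast_zmod_eq_zero_iff_dvd _ _).mp hc0
    have hD : ((p : ℤ) ^ 2) ∣ (a j * c j - 1) := Int.ModEq.dvd (hc j).symm
    have hX : ((p : ℤ) ^ 2) ∣ (a j * V ^ 2 - 2 * H * V + c j * H ^ 2) := by
      obtain ⟨y, hy⟩ := hv1
      have h1 : ((p : ℤ) ^ 2) ∣ (a j * V - H) ^ 2 := ⟨y ^ 2, by rw [hy]; ring⟩
      have h3 := dvd_sub (h1.mul_left (c j)) (hD.mul_right (a j * V ^ 2 - 2 * H * V))
      rwa [show c j * (a j * V - H) ^ 2 - (a j * c j - 1) * (a j * V ^ 2 - 2 * H * V)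
          = a j * V ^ 2 - 2 * H * V + c j * H ^ 2 from by ring] at h3
    have hY : (p : ℤ) ∣ (V - c j * H) := by
      have hp1 : (p : ℤ) ∣ (a j * c j - 1) := (dvd_pow_self (p : ℤ) two_ne_zero).trans hD
      have h3 := dvd_sub (hv1.mul_left (c j)) (hp1.mul_right V)
      rwa [show c j * (a j * V - H) - (a j * c j - 1) * V = V - c j * H from by ring] at h3
    obtain ⟨x, hx⟩ := hX
    obtain ⟨y, hy⟩ := hY
    refine ⟨-(l * b j * x) + (s : ℤ) * b j * y, ?_⟩
    linear_combination (-(l * b j)) * hx + ((p : ℤ) * (s : ℤ) * b j) * hy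
  have hcong :
      (∑ j, (l * a j * b j * ((((a j : ZMod p))⁻¹ * h).val : ℤ) ^ 2 -
          (2 * l * (h.val : ℤ) + (p : ℤ) * (s : ℤ)) * b j * ((((a j : ZMod p))⁻¹ * h).val : ℤ)))
        ≡ (∑ j, (-(l * ((h.val : ℤ)) ^ 2) + -((p : ℤ) * (s : ℤ) * (h.val : ℤ))) * (b j * c j))
          [ZMOD ((p ^ 2 : ℕ) : ℤ)] := by
    apply Int.modEq_iff_dvd.mpr
    rw [← Finset.sum_sub_distrib]
    push_cast
    exact Finset.dvd_sum fun j _ => hdvd j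
  rw [Finset.prod_congr rfl (fun j _ => etaP_eq p hp l h (s : ℤ) (a j) (b j) (ha j)),
    ← zpow_sum' hζ2, zetaC_zpow_congr (p ^ 2) hp2ne hcong, ← Finset.mul_sum,
    show (-(l * ((h.val : ℤ)) ^ 2) + -((p : ℤ) * (s : ℤ) * (h.val : ℤ))) * (∑ j, b j * c j)
        = -(l * ((h.val : ℤ)) ^ 2) * (∑ j, b j * c j) +
          (p : ℤ) * (-((h.val : ℤ) * (∑ j, b j * c j)) * (s : ℤ)) from by ring,
    zpow_add₀ hζ2, zetaC_pow_mul p hppos]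
  congr 1
  rw [zpow_mul, zpow_natCast]

theorem statement17 (p : ℕ) [NeZero p] (hp : p.Prime) (hp2 : p ≠ 2) (l : ℤ)
    (n : ℕ) (hn : 1 ≤ n) (a b c : Fin n → ℤ)
    (ha : ∀ j, ¬ (p : ℤ) ∣ a j) (hc : ∀ j, a j * c j ≡ 1 [ZMOD ((p : ℤ) ^ 2)]) :
    (¬ (p : ℤ) ∣ (∑ j, b j * c j) →
      (∑ h : ZMod p, ∑ s ∈ Finset.range p, ∏ j, etaP p l h (s : ℤ) (a j) (b j)) = (p : ℂ)) ∧
    (∀ r : ℤ, (∑ j, b j * c j) = r * p →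
      (∑ h : ZMod p, ∑ s ∈ Finset.range p, ∏ j, etaP p l h (s : ℤ) (a j) (b j)) =
        (p : ℂ) * SP p (-(l * r))) := by
  classical
  have hppos : p ≠ 0 := NeZero.ne p
  have hζp : zetaC p ≠ 0 := zetaC_ne_zero _
  have hprim : IsPrimitiveRoot (zetaC p) p := zetaC_prim p hppos
  have hpP : Prime ((p : ℤ)) := Nat.prime_iff_prime_int.mp hp
  have step2 : ∀ h : ZMod p,
      (∑ s ∈ Finset.range p, ∏ j, etaP p l h (s : ℤ) (a j) (b j)) =
        zetaC (p ^ 2) ^ (-(l * ((h.val : ℤ)) ^ 2) * (∑ j, b j * c j)) *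
          (if (p : ℤ) ∣ ((h.val : ℤ) * (∑ j, b j * c j)) then (p : ℂ) else 0) := by
    intro h
    rw [Finset.sum_congr rfl (fun s _ => prod_etaP_eq p hp l n a b c ha hc h s),
      ← Finset.mul_sum]
    congr 1
    have hwp : (zetaC p ^ (-((h.val : ℤ) * (∑ j, b j * c j)))) ^ p = 1 := by
      rw [← zpow_natCast (zetaC p ^ _), ← zpow_mul, mul_comm, zpow_mul, zpow_natCast,
        hprim.pow_eq_one, one_zpow]
    by_cases hcase : (p : ℤ) ∣ ((h.val : ℤ) * (∑ j, b j * c j))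
    · rw [if_pos hcase]
      exact geom_root_one ((hprim.zpow_eq_one_iff_dvd _).mpr (dvd_neg.mpr hcase))
    · rw [if_neg hcase]
      refine geom_root_zero (fun hw1 => ?_) hwp
      exact hcase (dvd_neg.mp ((hprim.zpow_eq_one_iff_dvd _).mp hw1))
  constructor
  · intro hBnd
    rw [Finset.sum_congr rfl (fun h _ => step2 h), Finset.sum_eq_single (0 : ZMod p)]
    · simp
    · intro h _ hne
      have hnd : ¬ (p : ℤ) ∣ ((h.val : ℤ) * (∑ j, b j * c j)) := by
        intro hdvd
        rcases hpP.2.2 _ _ hdvd with h1 | h1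
        · have h2 : (p : ℕ) ∣ h.val := Int.ofNat_dvd.mp h1
          have h3 : h.val = 0 := Nat.eq_zero_of_dvd_of_lt h2 (ZMod.val_lt h)
          exact hne ((ZMod.val_eq_zero h).mp h3)
        · exact hBnd h1
      rw [if_neg hnd, mul_zero]
    · intro h0; exact absurd (Finset.mem_univ _) h0
  · intro r hr
    rw [Finset.sum_congr rfl (fun h _ => step2 h)]
    have hterm : ∀ h : ZMod p,
        zetaC (p ^ 2) ^ (-(l * ((h.val : ℤ)) ^ 2) * (∑ j, b j * c j)) *
          (if (p : ℤ) ∣ ((h.val : ℤ) * (∑ j, b j * c j)) then (p : ℂ) else 0)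
        = (p : ℂ) * zetaC p ^ (-(l * r) * ((h.val : ℤ)) ^ 2) := by
      intro h
      have hd : (p : ℤ) ∣ ((h.val : ℤ) * (∑ j, b j * c j)) := ⟨(h.val : ℤ) * r, by rw [hr]; ring⟩
      rw [if_pos hd,
        show -(l * ((h.val : ℤ)) ^ 2) * (∑ j, b j * c j)
            = (p : ℤ) * (-(l * r) * ((h.val : ℤ)) ^ 2) from by rw [hr]; ring,
        zetaC_pow_mul p hppos]
      ring
    rw [Finset.sum_congr rfl (fun h _ => hterm h), ← Finset.mul_sum]
    congr 1
    unfold SP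
    refine Finset.sum_nbij' (fun h => h.val) (fun k => ((k : ℕ) : ZMod p)) ?_ ?_ ?_ ?_ ?_
    · intro h _; exact Finset.mem_range.mpr (ZMod.val_lt h)
    · intro k _; exact Finset.mem_univ _
    · intro h _; exact ZMod.natCast_zmod_val h
    · intro k hk; exact ZMod.val_cast_of_lt (Finset.mem_range.mp hk)
    · intro h _; rfl
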